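/- Let K be an algebraically closed field of characteristic zero, L a finite-dimensional semisimple Lie algebra over K with nondegenerate Killing form, and H a splitting Cartan subalgebra of L. Let α be a root, e ∈ L_α and f ∈ L_{−α} elements such that (h,e,f) is an sl₂-triple with h = ⁅e,f⁆ ∈ H, and let θ = exp(ad e) ∘ exp(ad(−f)) ∘ exp(ad e) (ad(e) and ad(f) are nilpotent since e and f lie in root spaces). Then for every linear functional β on H, θ maps the root space L_β bijectively onto the root space L_{β − β(h)α}. -/

import Mathlib

/-- For a linear functional `α` on a Lie subalgebra `H` of `L`, the root space `L_α` is
`{x ∈ L : ⁅h, x⁆ = α h • x for all h ∈ H}`. -/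
def rootSpace' {K L : Type*} [Field K] [LieRing L] [LieAlgebra K L]
    (H : LieSubalgebra K L) (α : Module.Dual K H) : Submodule K L :=
  ⨅ h : H, Module.End.eigenspace (LieAlgebra.ad K L (h : L)) (α h)

/-- `α` is a root of `(L, H)` if it is a nonzero functional with nonzero root space. -/
def IsRoot' {K L : Type*} [Field K] [LieRing L] [LieAlgebra K L]
    (H : LieSubalgebra K L) (α : Module.Dual K H) : Prop :=
  α ≠ 0 ∧ rootSpace' H α ≠ ⊥

/-- The exponential `exp D = Σₙ Dⁿ/n!` of an endomorphism `D`.  For a nilpotent `D` this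
is the usual exponential, since the sum ranges over all `n` with `D ^ n ≠ 0`
(`D ^ n = 0` whenever `n ≥ nilpotencyClass D`). -/
noncomputable def expEnd {K M : Type*} [Field K] [AddCommGroup M] [Module K M]
    (D : Module.End K M) : Module.End K M :=
  ∑ n ∈ Finset.range (nilpotencyClass D + 1), (n.factorial : K)⁻¹ • D ^ n

open Finset LinearMap

section ExpMachinery

variable {K V : Type*} [Field K] [CharZero K] [AddCommGroup V] [Module K V]

/-- truncated exponential -/
noncomputable def texp (N : Module.End K V) (M : ℕ) : Module.End K V :=
  ∑ n ∈ Finset.range M, (n.factorial : K)⁻¹ • N ^ n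

omit [CharZero K] in
lemma texp_eq_of_pow_eq_zero {N : Module.End K V} {a : ℕ} (h : N ^ a = 0)
    {M₁ M₂ : ℕ} (h1 : a ≤ M₁) (h2 : a ≤ M₂) : texp N M₁ = texp N M₂ := by
  have key : ∀ M, a ≤ M → texp N M = texp N a := by
    intro M hM
    rw [texp, texp, ← Finset.sum_subset (Finset.range_subset_range.mpr hM)]
    intro n hn hn'
    have : a ≤ n := by simpa using hn'
    rw [pow_eq_zero_of_le this h, smul_zero]
  rw [key _ h1, key _ h2]

omit [CharZero K] in
lemma expEnd_eq_texp {N : Module.End K V} (hN : IsNilpotent N) {M : ℕ}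
    (hM : nilpotencyClass N + 1 ≤ M) : expEnd N = texp N M :=
  texp_eq_of_pow_eq_zero (pow_eq_zero_of_le (Nat.le_succ _) (pow_nilpotencyClass hN))
    le_rfl hM

/-- triangle sum reindex -/
lemma triangle_sum {A : Type*} [AddCommMonoid A] (M : ℕ) (f : ℕ → ℕ → A) :
    ∑ n ∈ range M, ∑ k ∈ range (n + 1), f k (n - k) =
      ∑ p ∈ (range M ×ˢ range M).filter (fun p => p.1 + p.2 < M), f p.1 p.2 := by
  induction M with
  | zero => simp
  | succ M ih =>
    rw [Finset.sum_range_succ, ih]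
    have hset : (Finset.range (M+1) ×ˢ Finset.range (M+1)).filter (fun p => p.1 + p.2 < M + 1) =
        (Finset.range M ×ˢ Finset.range M).filter (fun p => p.1 + p.2 < M) ∪ Finset.HasAntidiagonal.antidiagonal M := by
      ext p
      simp only [Finset.mem_filter, Finset.mem_product, Finset.mem_range, Finset.mem_union,
        Finset.HasAntidiagonal.mem_antidiagonal]
      omega
    rw [hset, Finset.sum_union, ← Finset.Nat.sum_antidiagonal_eq_sum_range_succ_mk (fun p => f p.1 p.2)]
    · rw [Finset.disjoint_left]
      intro p hp hp'
      simp only [Finset.mem_filter] at hp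
      simp only [Finset.HasAntidiagonal.mem_antidiagonal] at hp'
      omega

omit [CharZero K] in
lemma pow_mul_eq_sum_comm (N X : Module.End K V) (n : ℕ) :
    N ^ n * X = ∑ k ∈ range (n + 1),
      (n.choose k) • ((((mulLeft K N - mulRight K N)) ^ k) X * N ^ (n - k)) := by
  set D := mulLeft K N - mulRight K N with hD
  set r := mulRight K N with hr
  have hc : Commute D r := ((commute_mulLeft_right N N).sub_left (Commute.refl r))
  have h1 : mulLeft K N = D + r := by rw [hD, sub_add_cancel]
  have h2 : N ^ n * X = ((mulLeft K N) ^ n) X := by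
    rw [pow_mulLeft, mulLeft_apply]
  rw [h2, h1, hc.add_pow, LinearMap.sum_apply]
  refine Finset.sum_congr rfl fun k hk => ?_
  have : (D ^ k * r ^ (n - k) * (n.choose k : Module.End K (Module.End K V))) X
      = (n.choose k) • ((D ^ k) ((r ^ (n-k)) X)) := by
    rw [Module.End.mul_apply, Module.End.mul_apply, Module.End.natCast_apply, map_nsmul, map_nsmul]
  rw [this]
  congr 1
  have hcomm : (D ^ k) ((r ^ (n - k)) X) = (r ^ (n - k)) ((D ^ k) X) := by
    rw [← Module.End.mul_apply, ← Module.End.mul_apply, (hc.pow_pow k (n-k)).eq]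
  rw [hcomm, pow_mulRight, mulRight_apply]

lemma hfac {k n : ℕ} (hkn : k ≤ n) :
    (n.factorial : K)⁻¹ * n.choose k = (k.factorial : K)⁻¹ * ((n - k).factorial : K)⁻¹ := by
  have h := Nat.choose_mul_factorial_mul_factorial hkn
  have h2 : ((n.choose k : K)) * k.factorial * (n - k).factorial = n.factorial := by
    exact_mod_cast congrArg (Nat.cast : ℕ → K) h
  have h3 : (n.factorial : K) ≠ 0 := Nat.cast_ne_zero.mpr n.factorial_ne_zero
  have h4 : (k.factorial : K) ≠ 0 := Nat.cast_ne_zero.mpr k.factorial_ne_zero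
  have h5 : ((n - k).factorial : K) ≠ 0 := Nat.cast_ne_zero.mpr (n - k).factorial_ne_zero
  field_simp
  linear_combination h2

set_option maxHeartbeats 1000000 in
lemma texp_mul_push (N X : Module.End K V) (a m : ℕ) (hN : N ^ a = 0)
    (hm : ((mulLeft K N - mulRight K N) ^ m) X = 0) :
    texp N (a + m) * X =
      (∑ k ∈ range m, (k.factorial : K)⁻¹ • ((mulLeft K N - mulRight K N) ^ k) X) * texp N a := by
  set D := mulLeft K N - mulRight K N with hD
  set M := a + m with hM
  have hc : ∀ k, m ≤ k → (D ^ k) X = 0 := by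
    intro k hk
    have : D ^ k = D ^ (k - m) * D ^ m := by rw [← pow_add]; congr 1; omega
    rw [this, Module.End.mul_apply, hm, map_zero]
  have hg : ∀ p : ℕ × ℕ, (m ≤ p.1 ∨ a ≤ p.2) →
      ((p.1.factorial : K)⁻¹ * (p.2.factorial : K)⁻¹) • ((D ^ p.1) X * N ^ p.2) = 0 := by
    rintro p (hp | hp)
    · rw [hc p.1 hp, zero_mul, smul_zero]
    · rw [pow_eq_zero_of_le hp hN, mul_zero, smul_zero]
  calc texp N M * X
      = ∑ n ∈ range M, (n.factorial : K)⁻¹ • (N ^ n * X) := by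
        rw [texp, Finset.sum_mul]
        exact Finset.sum_congr rfl fun n _ => smul_mul_assoc _ _ _
    _ = ∑ n ∈ range M, ∑ k ∈ range (n + 1),
          ((k.factorial : K)⁻¹ * ((n - k).factorial : K)⁻¹) • ((D ^ k) X * N ^ (n - k)) := by
        refine Finset.sum_congr rfl fun n _ => ?_
        rw [pow_mul_eq_sum_comm, Finset.smul_sum]
        refine Finset.sum_congr rfl fun k hk => ?_
        rw [← Nat.cast_smul_eq_nsmul K, smul_smul, hfac (by simpa using Nat.lt_succ_iff.mp (mem_range.mp hk))]
    _ = ∑ p ∈ (range M ×ˢ range M).filter (fun p => p.1 + p.2 < M),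
          ((p.1.factorial : K)⁻¹ * (p.2.factorial : K)⁻¹) • ((D ^ p.1) X * N ^ p.2) :=
        triangle_sum M (fun k j => ((k.factorial : K)⁻¹ * (j.factorial : K)⁻¹) • ((D ^ k) X * N ^ j))
    _ = ∑ p ∈ range M ×ˢ range M,
          ((p.1.factorial : K)⁻¹ * (p.2.factorial : K)⁻¹) • ((D ^ p.1) X * N ^ p.2) := by
        refine Finset.sum_subset (Finset.filter_subset _ _) fun p hp hp' => ?_
        simp only [Finset.mem_filter, Finset.mem_product, Finset.mem_range] at hp hp'
        exact hg p (by omega)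
    _ = (∑ k ∈ range M, (k.factorial : K)⁻¹ • (D ^ k) X) * ∑ j ∈ range M, (j.factorial : K)⁻¹ • N ^ j := by
        rw [Finset.sum_mul_sum, ← Finset.sum_product']
        refine Finset.sum_congr rfl fun p _ => ?_
        rw [smul_mul_smul_comm]
    _ = (∑ k ∈ range m, (k.factorial : K)⁻¹ • (D ^ k) X) * texp N a := by
        rw [← texp, texp_eq_of_pow_eq_zero hN (by omega) le_rfl]
        congr 1
        rw [← Finset.sum_subset (Finset.range_subset_range.mpr (by omega : m ≤ M))]
        intro k hk hk'
        rw [hc k (by simpa using hk'), smul_zero]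

set_option maxHeartbeats 1000000 in
lemma texp_mul_texp_neg (N : Module.End K V) (a b : ℕ) (hN : N ^ a = 0) (hN' : (-N) ^ b = 0) :
    texp N (a + b + 1) * texp (-N) (a + b + 1) = 1 := by
  set M := a + b + 1 with hM
  calc texp N M * texp (-N) M
      = ∑ p ∈ range M ×ˢ range M,
          ((p.1.factorial : K)⁻¹ * (p.2.factorial : K)⁻¹) • (N ^ p.1 * (-N) ^ p.2) := by
        rw [texp, texp, Finset.sum_mul_sum, ← Finset.sum_product']
        exact Finset.sum_congr rfl fun p _ => smul_mul_smul_comm _ _ _ _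
    _ = ∑ p ∈ (range M ×ˢ range M).filter (fun p => p.1 + p.2 < M),
          ((p.1.factorial : K)⁻¹ * (p.2.factorial : K)⁻¹) • (N ^ p.1 * (-N) ^ p.2) := by
        refine (Finset.sum_subset (Finset.filter_subset _ _) fun p hp hp' => ?_).symm
        simp only [Finset.mem_filter, Finset.mem_product, Finset.mem_range] at hp hp'
        have : a ≤ p.1 ∨ b ≤ p.2 := by omega
        rcases this with h | h
        · rw [pow_eq_zero_of_le h hN, zero_mul, smul_zero]
        · rw [pow_eq_zero_of_le h hN', mul_zero, smul_zero]
    _ = ∑ n ∈ range M, ∑ k ∈ range (n + 1),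
          ((k.factorial : K)⁻¹ * ((n - k).factorial : K)⁻¹) • (N ^ k * (-N) ^ (n - k)) :=
        (triangle_sum M (fun k j => ((k.factorial : K)⁻¹ * (j.factorial : K)⁻¹) • (N ^ k * (-N) ^ j))).symm
    _ = ∑ n ∈ range M, (n.factorial : K)⁻¹ • ((N + -N) ^ n) := by
        refine Finset.sum_congr rfl fun n _ => ?_
        rw [(Commute.neg_right (Commute.refl N)).add_pow, Finset.smul_sum]
        refine Finset.sum_congr rfl fun k hk => ?_
        rw [← hfac (Nat.lt_succ_iff.mp (mem_range.mp hk)), mul_smul]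
        congr 1
        rw [Nat.cast_smul_eq_nsmul, nsmul_eq_mul, (Nat.cast_commute (n.choose k) _).eq]
    _ = 1 := by
        rw [Finset.sum_eq_single 0]
        · simp
        · intro n _ hn
          rw [add_neg_cancel, zero_pow hn, smul_zero]
        · intro h; exact absurd (Finset.mem_range.mpr (by omega)) h

omit [CharZero K] in
lemma pow_succ_eq_zero_of_nilpotent {N : Module.End K V} (hN : IsNilpotent N) :
    N ^ (nilpotencyClass N + 1) = 0 := by
  rw [pow_succ, pow_nilpotencyClass hN, zero_mul]

lemma expEnd_push₂ (N X Y : Module.End K V) (hN : IsNilpotent N)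
    (h1 : N * X - X * N = Y) (h2 : N * Y - Y * N = 0) :
    expEnd N * X = (X + Y) * expEnd N := by
  set a := nilpotencyClass N + 1 with ha
  set D := mulLeft K N - mulRight K N with hD
  have hNa : N ^ a = 0 := pow_succ_eq_zero_of_nilpotent hN
  have hDX : D X = Y := by
    rw [hD, LinearMap.sub_apply, mulLeft_apply, mulRight_apply, h1]
  have hDY : D Y = 0 := by
    rw [hD, LinearMap.sub_apply, mulLeft_apply, mulRight_apply, h2]
  have hm : (D ^ 2) X = 0 := by rw [pow_two, Module.End.mul_apply, hDX, hDY]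
  have key := texp_mul_push N X a 2 hNa hm
  have hsum : (∑ k ∈ range 2, (k.factorial : K)⁻¹ • (D ^ k) X) = X + Y := by
    rw [Finset.sum_range_succ, Finset.sum_range_one]
    simp [hDX]
  rw [hsum] at key
  rw [expEnd_eq_texp hN (show nilpotencyClass N + 1 ≤ a + 2 by omega), key]
  congr 1
  exact texp_eq_of_pow_eq_zero hNa le_rfl (by omega)

lemma expEnd_push₃ (N X Y Z : Module.End K V) (hN : IsNilpotent N)
    (h1 : N * X - X * N = Y) (h2 : N * Y - Y * N = Z) (h3 : N * Z - Z * N = 0) :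
    expEnd N * X = (X + Y + (2 : K)⁻¹ • Z) * expEnd N := by
  set a := nilpotencyClass N + 1 with ha
  set D := mulLeft K N - mulRight K N with hD
  have hNa : N ^ a = 0 := pow_succ_eq_zero_of_nilpotent hN
  have hDX : D X = Y := by
    rw [hD, LinearMap.sub_apply, mulLeft_apply, mulRight_apply, h1]
  have hDY : D Y = Z := by
    rw [hD, LinearMap.sub_apply, mulLeft_apply, mulRight_apply, h2]
  have hDZ : D Z = 0 := by
    rw [hD, LinearMap.sub_apply, mulLeft_apply, mulRight_apply, h3]
  have hm : (D ^ 3) X = 0 := by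
    rw [pow_succ, Module.End.mul_apply, pow_two, Module.End.mul_apply, hDX, hDY, hDZ]
  have key := texp_mul_push N X a 3 hNa hm
  have hsum : (∑ k ∈ range 3, (k.factorial : K)⁻¹ • (D ^ k) X) = X + Y + (2 : K)⁻¹ • Z := by
    rw [Finset.sum_range_succ, Finset.sum_range_succ, Finset.sum_range_one]
    have e2 : (D ^ 2) X = Z := by rw [pow_two, Module.End.mul_apply, hDX, hDY]
    simp [hDX, e2]
  rw [hsum] at key
  rw [expEnd_eq_texp hN (show nilpotencyClass N + 1 ≤ a + 3 by omega), key]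
  congr 1
  exact texp_eq_of_pow_eq_zero hNa le_rfl (by omega)

lemma expEnd_mul_expEnd_neg (N : Module.End K V) (hN : IsNilpotent N) :
    expEnd N * expEnd (-N) = 1 := by
  set a := nilpotencyClass N + 1 with ha
  set b := nilpotencyClass (-N) + 1 with hb
  have hNa : N ^ a = 0 := pow_succ_eq_zero_of_nilpotent hN
  have hNb : (-N) ^ b = 0 := pow_succ_eq_zero_of_nilpotent hN.neg
  rw [expEnd_eq_texp hN (show nilpotencyClass N + 1 ≤ a + b + 1 by omega),
    expEnd_eq_texp hN.neg (show nilpotencyClass (-N) + 1 ≤ a + b + 1 by omega)]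
  exact texp_mul_texp_neg N a b hNa hNb

lemma expEnd_neg_mul_expEnd (N : Module.End K V) (hN : IsNilpotent N) :
    expEnd (-N) * expEnd N = 1 := by
  have := expEnd_mul_expEnd_neg (-N) hN.neg
  rwa [neg_neg] at this

end ExpMachinery

section KeyOp

open LieAlgebra

variable {K L : Type*} [Field K] [CharZero K] [LieRing L] [LieAlgebra K L]

lemma ad_mul_sub_mul_ad (x y : L) :
    ad K L x * ad K L y - ad K L y * ad K L x = ad K L ⁅x, y⁆ := by
  ext z
  simp only [LinearMap.sub_apply, Module.End.mul_apply, ad_apply]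
  rw [leibniz_lie]
  abel

/-- The key operator identity: conjugating `ad h'` by the Weyl element. -/
lemma key_op (H : LieSubalgebra K L) (α : Module.Dual K H) (e f : L) (h : H)
    (heig_e : ∀ h' : H, ⁅(h' : L), e⁆ = α h' • e)
    (heig_f : ∀ h' : H, ⁅(h' : L), f⁆ = -(α h' • f))
    (hef : ⁅e, f⁆ = (h : L))
    (hhe : ⁅(h : L), e⁆ = (2 : K) • e) (hhf : ⁅(h : L), f⁆ = (-2 : K) • f)
    (hnE : IsNilpotent (ad K L e)) (hnF : IsNilpotent (ad K L f)) (h' : H) :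
    ad K L (h' : L) *
      (expEnd (ad K L e) * expEnd (ad K L (-f)) * expEnd (ad K L e)) =
    (expEnd (ad K L e) * expEnd (ad K L (-f)) * expEnd (ad K L e)) *
      (ad K L (h' : L) - α h' • ad K L (h : L)) := by
  set c := α h' with hc
  have hnF' : IsNilpotent (ad K L (-f)) := by
    rw [map_neg]; exact hnF.neg
  -- elements of L
  set z₀ : L := (h' : L) - c • (h : L) with hz₀
  set z₁ : L := z₀ + c • e with hz₁
  set z₂ : L := (h' : L) + c • e with hz₂
  -- bracket computations in L
  have k1 : ⁅e, ((h' : H) : L)⁆ = -(c • e) := by rw [← lie_skew, heig_e h']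
  have k2 : ⁅e, (h : L)⁆ = -((2 : K) • e) := by rw [← lie_skew, hhe]
  have k3 : ⁅(-f), ((h' : H) : L)⁆ = -(c • f) := by
    rw [neg_lie, ← lie_skew, heig_f h', neg_neg]
  have k4 : ⁅(-f), (h : L)⁆ = (-2 : K) • f := by rw [neg_lie, ← lie_skew, hhf, neg_neg]
  have k5 : ⁅(-f), e⁆ = (h : L) := by rw [neg_lie, ← lie_skew, hef, neg_neg]
  -- step computations
  have hw1 : ⁅e, z₀⁆ = c • e := by
    rw [hz₀, lie_sub, lie_smul, k1, k2]
    module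
  have hw1' : ⁅e, (c : K) • e⁆ = 0 := by rw [lie_smul, lie_self, smul_zero]
  have hw2 : ⁅(-f), z₁⁆ = c • f + c • (h : L) := by
    rw [hz₁, lie_add, hz₀, lie_sub, lie_smul, lie_smul, k3, k4, k5]
    module
  have hw2' : ⁅(-f), c • f + c • (h : L)⁆ = (-(2 * c)) • f := by
    rw [lie_add, lie_smul, lie_smul, k4, neg_lie, lie_self, neg_zero]
    module
  have hw2'' : ⁅(-f), (-(2 * c)) • f⁆ = 0 := by
    rw [lie_smul, neg_lie, lie_self, neg_zero, smul_zero]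
  have hw3 : ⁅e, z₂⁆ = -(c • e) := by
    rw [hz₂, lie_add, k1, hw1']
    module
  have hw3' : ⁅e, -(c • e)⁆ = 0 := by rw [lie_neg, hw1', neg_zero]
  -- step 1
  have step1 : expEnd (ad K L e) * ad K L z₀ = ad K L z₁ * expEnd (ad K L e) := by
    have := expEnd_push₂ (ad K L e) (ad K L z₀) (ad K L (c • e)) hnE
      (by rw [ad_mul_sub_mul_ad, hw1]) (by rw [ad_mul_sub_mul_ad, hw1', map_zero])
    rw [this, ← map_add (ad K L)]
  -- step 2
  have step2 : expEnd (ad K L (-f)) * ad K L z₁ = ad K L z₂ * expEnd (ad K L (-f)) := by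
    have := expEnd_push₃ (ad K L (-f)) (ad K L z₁) (ad K L (c • f + c • (h : L)))
      (ad K L ((-(2 * c)) • f)) hnF'
      (by rw [ad_mul_sub_mul_ad, hw2]) (by rw [ad_mul_sub_mul_ad, hw2'])
      (by rw [ad_mul_sub_mul_ad, hw2'', map_zero])
    rw [this, ← map_smul (ad K L), ← map_add (ad K L), ← map_add (ad K L)]
    congr 2
    rw [hz₂, hz₁, hz₀]
    have h2 : (2 : K)⁻¹ • ((-(2 * c)) • f) = -(c • f) := by
      rw [smul_smul]
      have : (2 : K)⁻¹ * -(2 * c) = -c := by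
        field_simp
      rw [this, neg_smul]
    rw [h2]
    module
  -- step 3
  have step3 : expEnd (ad K L e) * ad K L z₂ = ad K L (h' : L) * expEnd (ad K L e) := by
    have := expEnd_push₂ (ad K L e) (ad K L z₂) (ad K L (-(c • e))) hnE
      (by rw [ad_mul_sub_mul_ad, hw3]) (by rw [ad_mul_sub_mul_ad, hw3', map_zero])
    rw [this, ← map_add (ad K L)]
    congr 2
    rw [hz₂]
    module
  -- assemble
  have hz₀' : ad K L (h' : L) - c • ad K L (h : L) = ad K L z₀ := by
    rw [hz₀]; simp
  rw [hz₀']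
  calc ad K L (h' : L) * (expEnd (ad K L e) * expEnd (ad K L (-f)) * expEnd (ad K L e))
      = (ad K L (h' : L) * expEnd (ad K L e)) * expEnd (ad K L (-f)) * expEnd (ad K L e) := by
        rw [mul_assoc, mul_assoc, mul_assoc]
    _ = (expEnd (ad K L e) * ad K L z₂) * expEnd (ad K L (-f)) * expEnd (ad K L e) := by
        rw [step3]
    _ = expEnd (ad K L e) * (ad K L z₂ * expEnd (ad K L (-f))) * expEnd (ad K L e) := by
        rw [mul_assoc (expEnd (ad K L e))]
    _ = expEnd (ad K L e) * (expEnd (ad K L (-f)) * ad K L z₁) * expEnd (ad K L e) := by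
        rw [step2]
    _ = expEnd (ad K L e) * expEnd (ad K L (-f)) * (ad K L z₁ * expEnd (ad K L e)) := by
        rw [mul_assoc, mul_assoc, mul_assoc]
    _ = expEnd (ad K L e) * expEnd (ad K L (-f)) * (expEnd (ad K L e) * ad K L z₀) := by
        rw [step1]
    _ = expEnd (ad K L e) * expEnd (ad K L (-f)) * expEnd (ad K L e) * ad K L z₀ := by
        rw [mul_assoc, mul_assoc, mul_assoc]

end KeyOp

section Assembly

open LieAlgebra LieModule

variable {K L : Type*} [Field K] [LieRing L] [LieAlgebra K L]

lemma mem_rootSpace'_iff {H : LieSubalgebra K L} {α : Module.Dual K H} {x : L} :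
    x ∈ rootSpace' H α ↔ ∀ h' : H, ⁅(h' : L), x⁆ = α h' • x := by
  simp only [rootSpace', Submodule.mem_iInf, Module.End.mem_eigenspace_iff, ad_apply]

variable [IsAlgClosed K] [CharZero K] [FiniteDimensional K L]

lemma isNilpotent_ad_of_mem_rootSpace' (H : LieSubalgebra K L) [H.IsCartanSubalgebra]
    (α : Module.Dual K H) (hα : α ≠ 0) (e : L) (he : e ∈ rootSpace' H α) :
    IsNilpotent (ad K L e) := by
  classical
  set χ : ↥H → K := fun h' => α h' with hχdef
  have hχ : χ ≠ 0 := by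
    intro hc
    apply hα
    ext h'
    exact congrFun hc h'
  have he' := mem_rootSpace'_iff.mp he
  have heR : e ∈ rootSpace H χ := by
    rw [rootSpace, mem_genWeightSpace]
    intro x
    refine ⟨1, ?_⟩
    rw [pow_one, LinearMap.sub_apply, LinearMap.smul_apply, Module.End.one_apply]
    rw [sub_eq_zero]
    have : (toEnd K H L x) e = ⁅(x : L), e⁆ := rfl
    rw [this, he' x]
  have hfin : {χ₂ : ↥H → K | genWeightSpace L χ₂ ≠ ⊥}.Finite :=
    finite_genWeightSpace_ne_bot K H L
  have hev : ∀ᶠ k : ℕ in Filter.atTop, ∀ χ₂ ∈ {χ₂ : ↥H → K | genWeightSpace L χ₂ ≠ ⊥},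
      genWeightSpace L (k • χ + χ₂) = ⊥ :=
    (Filter.eventually_all_finite hfin).mpr
      (fun χ₂ _ => eventually_genWeightSpace_smul_add_eq_bot L χ χ₂ hχ)
  obtain ⟨n, hn⟩ := hev.exists
  refine ⟨n, ?_⟩
  have htop : (⨆ χ₂ : ↥H → K, (genWeightSpace L χ₂ : Submodule K L)) = ⊤ := by
    have := iSup_genWeightSpace_eq_top K H L
    rw [← LieSubmodule.toSubmodule_inj] at this
    rwa [LieSubmodule.iSup_toSubmodule, LieSubmodule.top_toSubmodule] at this
  have hker : ∀ χ₂ : ↥H → K, (genWeightSpace L χ₂ : Submodule K L) ≤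
      LinearMap.ker ((ad K L e) ^ n) := by
    intro χ₂ x hx
    rw [LinearMap.mem_ker]
    by_cases hbot : genWeightSpace L χ₂ = ⊥
    · rw [hbot] at hx
      simp only [LieSubmodule.bot_toSubmodule, Submodule.mem_bot] at hx
      rw [hx, map_zero]
    · have hmem := LieAlgebra.toEnd_pow_apply_mem heR hx n
      rw [hn χ₂ hbot] at hmem
      simp at hmem
      exact hmem
  have : (⊤ : Submodule K L) ≤ LinearMap.ker ((ad K L e) ^ n) := by
    rw [← htop]
    exact iSup_le hker
  ext x
  exact LinearMap.mem_ker.mp (this trivial)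

/-- If `θ` satisfies the Weyl commutation relation then it maps root spaces accordingly. -/
lemma mapsTo_of_comm (H : LieSubalgebra K L) (α : Module.Dual K H) (h : H)
    (θ : Module.End K L)
    (hcomm : ∀ h' : H, ad K L (h' : L) * θ =
      θ * (ad K L (h' : L) - α h' • ad K L (h : L)))
    (β : Module.Dual K H) :
    Set.MapsTo θ (rootSpace' H β) (rootSpace' H (β - β h • α)) := by
  intro x hx
  have hx' := mem_rootSpace'_iff.mp hx
  rw [SetLike.mem_coe, mem_rootSpace'_iff]
  intro h'
  have h1 : ⁅(h' : L), θ x⁆ = (ad K L (h' : L) * θ) x := rfl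
  rw [h1, hcomm h', Module.End.mul_apply, LinearMap.sub_apply, LinearMap.smul_apply]
  have h2 : (ad K L (h' : L)) x = β h' • x := by rw [ad_apply, hx' h']
  have h3 : (ad K L (h : L)) x = β h • x := by rw [ad_apply, hx' h]
  rw [h2, h3, smul_smul, ← sub_smul, map_smul]
  congr 1
  simp only [LinearMap.sub_apply, LinearMap.smul_apply, smul_eq_mul]
  ring

end Assembly

open LieAlgebra in
/-- Let `L` be a finite-dimensional semisimple Lie algebra over an algebraically closed
field of characteristic zero (nondegenerate Killing form), `H` a (splitting) Cartan
subalgebra, `α` a root, `e ∈ L_α`, `f ∈ L_{−α}` with `(h, e, f)` an `sl₂`-triple where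
`h = ⁅e, f⁆ ∈ H`, and `θ = exp(ad e) ∘ exp(ad (−f)) ∘ exp(ad e)`.  Then for every linear
functional `β` on `H`, `θ` maps `L_β` bijectively onto `L_{β − β(h)α}`. -/
theorem weyl_element_maps_root_spaces
    {K L : Type*} [Field K] [IsAlgClosed K] [CharZero K]
    [LieRing L] [LieAlgebra K L] [FiniteDimensional K L]
    [LieAlgebra.IsSemisimple K L] [LieAlgebra.IsKilling K L]
    (H : LieSubalgebra K L) [H.IsCartanSubalgebra]
    (α : Module.Dual K H) (hroot : IsRoot' H α)
    (e f : L) (hmeme : e ∈ rootSpace' H α) (hmemf : f ∈ rootSpace' H (-α))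
    (h : H) (hef : ⁅e, f⁆ = (h : L)) (he : e ≠ 0) (hf : f ≠ 0)
    (hhe : ⁅(h : L), e⁆ = (2 : K) • e) (hhf : ⁅(h : L), f⁆ = (-2 : K) • f)
    (θ : Module.End K L)
    (hθ : θ = expEnd (LieAlgebra.ad K L e) * expEnd (LieAlgebra.ad K L (-f)) *
      expEnd (LieAlgebra.ad K L e))
    (β : Module.Dual K H) :
    Set.BijOn θ (rootSpace' H β) (rootSpace' H (β - β h • α)) := by
  classical
  have heig_e : ∀ h' : H, ⁅(h' : L), e⁆ = α h' • e := mem_rootSpace'_iff.mp hmeme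
  have heig_f : ∀ h' : H, ⁅(h' : L), f⁆ = -(α h' • f) := by
    intro h'
    have := mem_rootSpace'_iff.mp hmemf h'
    rwa [LinearMap.neg_apply, neg_smul] at this
  have hαh : α h = 2 := by
    have h1 := heig_e h
    rw [hhe] at h1
    have h2 : ((2 : K) - α h) • e = 0 := by rw [sub_smul, ← h1, sub_self]
    rcases smul_eq_zero.mp h2 with hc | hc
    · exact (sub_eq_zero.mp hc).symm
    · exact absurd hc he
  have hnE : IsNilpotent (ad K L e) := isNilpotent_ad_of_mem_rootSpace' H α hroot.1 e hmeme
  have hnF : IsNilpotent (ad K L f) :=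
    isNilpotent_ad_of_mem_rootSpace' H (-α) (neg_ne_zero.mpr hroot.1) f hmemf
  have hcommθ : ∀ h' : H, ad K L (h' : L) * θ =
      θ * (ad K L (h' : L) - α h' • ad K L (h : L)) := by
    intro h'
    rw [hθ]
    exact key_op H α e f h heig_e heig_f hef hhe hhf hnE hnF h'
  -- the inverse Weyl element
  set τ : Module.End K L := expEnd (ad K L (-e)) * expEnd (ad K L f) * expEnd (ad K L (-e))
    with hτ
  have heig_e' : ∀ h' : H, ⁅(h' : L), -e⁆ = α h' • (-e) := by
    intro h'
    rw [lie_neg, heig_e h', smul_neg]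
  have heig_f' : ∀ h' : H, ⁅(h' : L), -f⁆ = -(α h' • (-f)) := by
    intro h'
    rw [lie_neg, heig_f h', smul_neg]
  have hef' : ⁅-e, -f⁆ = (h : L) := by rw [neg_lie, lie_neg, neg_neg, hef]
  have hhe' : ⁅(h : L), -e⁆ = (2 : K) • (-e) := by rw [lie_neg, hhe, smul_neg]
  have hhf' : ⁅(h : L), -f⁆ = (-2 : K) • (-f) := by rw [lie_neg, hhf, smul_neg]
  have hnE' : IsNilpotent (ad K L (-e)) := by rw [map_neg]; exact hnE.neg
  have hnF' : IsNilpotent (ad K L (-f)) := by rw [map_neg]; exact hnF.neg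
  have hcommτ : ∀ h' : H, ad K L (h' : L) * τ =
      τ * (ad K L (h' : L) - α h' • ad K L (h : L)) := by
    intro h'
    have := key_op H α (-e) (-f) h heig_e' heig_f' hef' hhe' hhf' hnE' hnF' h'
    rwa [neg_neg] at this
  -- θ and τ are mutually inverse
  have hadne : ad K L (-e) = -(ad K L e) := map_neg _ _
  have hadnf : ad K L (-f) = -(ad K L f) := map_neg _ _
  have hadf : ad K L f = -(ad K L (-f)) := by rw [hadnf, neg_neg]
  have hnF2 : IsNilpotent (ad K L (-f)) := hnF'
  have hτ' : τ = expEnd (-(ad K L e)) * expEnd (-(ad K L (-f))) * expEnd (-(ad K L e)) := by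
    rw [hτ, hadne, hadf]
  have cancel : ∀ N : Module.End K L, IsNilpotent N → ∀ Z : Module.End K L,
      expEnd N * (expEnd (-N) * Z) = Z := by
    intro N hN Z
    rw [← mul_assoc, expEnd_mul_expEnd_neg _ hN, one_mul]
  have cancel' : ∀ N : Module.End K L, IsNilpotent N → ∀ Z : Module.End K L,
      expEnd (-N) * (expEnd N * Z) = Z := by
    intro N hN Z
    rw [← mul_assoc, expEnd_neg_mul_expEnd _ hN, one_mul]
  have hτθ : τ * θ = 1 := by
    rw [hτ', hθ]
    simp only [mul_assoc]
    rw [cancel' _ hnE, cancel' _ hnF2, expEnd_neg_mul_expEnd _ hnE]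
  have hθτ : θ * τ = 1 := by
    rw [hτ', hθ]
    simp only [mul_assoc]
    rw [cancel _ hnE, cancel _ hnF2, expEnd_mul_expEnd_neg _ hnE]
  -- assemble the bijection
  have hmaps := mapsTo_of_comm H α h θ hcommθ β
  have hβ' : (β - β h • α) - (β - β h • α) h • α = β := by
    ext h''
    simp only [LinearMap.sub_apply, LinearMap.smul_apply, smul_eq_mul]
    rw [hαh]
    ring
  have hmapsτ := mapsTo_of_comm H α h τ hcommτ (β - β h • α)
  rw [hβ'] at hmapsτ
  refine ⟨hmaps, ?_, ?_⟩
  · intro x _ y _ hxy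
    have h0 : τ (θ x) = τ (θ y) := congrArg τ hxy
    have hx1 : τ (θ x) = x := by rw [← Module.End.mul_apply, hτθ, Module.End.one_apply]
    have hy1 : τ (θ y) = y := by rw [← Module.End.mul_apply, hτθ, Module.End.one_apply]
    rw [hx1, hy1] at h0
    exact h0
  · intro y hy
    exact ⟨τ y, hmapsτ hy, by rw [← Module.End.mul_apply, hθτ, Module.End.one_apply]⟩
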